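/- For any n ≥ 1 and k ≥ 0, the number of permutations π in S_n with pk(π) = k and ipk(π) = 0 is equal to the binomial coefficient C(n, 2k+1). -/

import Mathlib

/-- The one-line notation of a permutation `π` of `{1,…,n}`, read as a function on 0-based
positions: `permWord π j = π_{j+1}` (values are 1-based; out-of-range positions give `0`). -/
def permWord {n : ℕ} (π : Equiv.Perm (Fin n)) (j : ℕ) : ℕ :=
  if h : j < n then ((π ⟨j, h⟩ : Fin n) : ℕ) + 1 else 0

/-- `π` contains `σ` as a consecutive pattern: some window of consecutive letters of `π`
has standardization `σ`, i.e. is order-isomorphic to the one-line word of `σ`. -/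
def ContainsPat {n m : ℕ} (π : Equiv.Perm (Fin n)) (σ : Equiv.Perm (Fin m)) : Prop :=
  ∃ i : ℕ, i + m ≤ n ∧ ∀ j k : Fin m,
    (permWord π (i + (j : ℕ)) < permWord π (i + (k : ℕ)) ↔ permWord σ j < permWord σ k)

/-- The number of peaks of `π`: 1-based indices `i` with `2 ≤ i ≤ n-1` and
`π_{i-1} < π_i > π_{i+1}`. -/
def pkCount {n : ℕ} (π : Equiv.Perm (Fin n)) : ℕ :=
  ((Finset.Icc 2 (n - 1)).filter fun i =>
    permWord π (i - 2) < permWord π (i - 1) ∧ permWord π i < permWord π (i - 1)).card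

/-- The number of left peaks of `π`: 1-based indices `i ∈ [n-1]` that are peaks,
or `i = 1` with `π_1 > π_2`. -/
def lpkCount {n : ℕ} (π : Equiv.Perm (Fin n)) : ℕ :=
  ((Finset.Icc 1 (n - 1)).filter fun i =>
    (2 ≤ i ∧ permWord π (i - 2) < permWord π (i - 1) ∧ permWord π i < permWord π (i - 1))
      ∨ (i = 1 ∧ permWord π 1 < permWord π 0)).card

/-- The number of peaks of `π⁻¹`. -/
def ipk {n : ℕ} (π : Equiv.Perm (Fin n)) : ℕ := pkCount π⁻¹

/-- The number of left peaks of `π⁻¹`. -/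
def ilpk {n : ℕ} (π : Equiv.Perm (Fin n)) : ℕ := lpkCount π⁻¹

namespace S7
open Finset
variable {n : ℕ}

lemma permWord_eq (π : Equiv.Perm (Fin n)) {j : ℕ} (h : j < n) :
    permWord π j = (π ⟨j, h⟩ : ℕ) + 1 := by simp [permWord, h]

lemma permWord_pos (π : Equiv.Perm (Fin n)) {j : ℕ} (h : j < n) : 0 < permWord π j := by
  simp [permWord, h]

lemma permWord_inj (π : Equiv.Perm (Fin n)) {j j' : ℕ} (hj : j < n) (hj' : j' < n)
    (h : permWord π j = permWord π j') : j = j' := by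
  rw [permWord_eq π hj, permWord_eq π hj'] at h
  have : π ⟨j, hj⟩ = π ⟨j', hj'⟩ := Fin.ext (by omega)
  exact congrArg Fin.val (π.injective this)

lemma chain_lt {f : ℕ → ℕ} {hi : ℕ} {lo : ℕ} (h : ∀ r, lo ≤ r → r + 1 ≤ hi → f r < f (r+1)) :
    ∀ x y, lo ≤ x → x < y → y ≤ hi → f x < f y := by
  intro x y hx hxy hy
  induction y, hxy using Nat.le_induction with
  | base => exact h x hx (by omega)
  | succ y hy' ih => exact lt_trans (ih (by omega)) (h y (by omega) (by omega))

lemma chain_gt {f : ℕ → ℕ} {hi : ℕ} {lo : ℕ} (h : ∀ r, lo ≤ r → r + 1 ≤ hi → f (r+1) < f r) :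
    ∀ x y, lo ≤ x → x < y → y ≤ hi → f y < f x := by
  intro x y hx hxy hy
  induction y, hxy using Nat.le_induction with
  | base => exact h x hx (by omega)
  | succ y hy' ih => exact lt_trans (h y (by omega) (by omega)) (ih (by omega))

def Pp (π : Equiv.Perm (Fin n)) : Prop :=
  ∀ j j' : ℕ, j < j' → j' < n →
    (permWord π j < permWord π j' ↔ permWord π 0 ≤ permWord π j')

lemma pp_of_ipk (π : Equiv.Perm (Fin n)) (h : ipk π = 0) : Pp π := by
  intro j j' hjj' hj'
  have hn : 0 < n := by omega
  set u : ℕ → ℕ := permWord π⁻¹ with hu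
  have h0 : ∀ i ∈ Finset.Icc 2 (n-1), ¬(u (i-2) < u (i-1) ∧ u i < u (i-1)) := by
    rw [ipk, pkCount, Finset.card_eq_zero, Finset.filter_eq_empty_iff] at h
    exact h
  have np : ∀ p, 1 ≤ p → p + 1 ≤ n - 1 → u (p-1) < u p → u p < u (p+1) := by
    intro p hp hpn hasc
    have h1 := h0 (p+1) (Finset.mem_Icc.mpr ⟨by omega, by omega⟩)
    rw [show p+1-2 = p-1 by omega, show p+1-1 = p by omega] at h1
    have hne : u (p+1) ≠ u p := fun e => by
      have := permWord_inj π⁻¹ (show p+1<n by omega) (show p<n by omega) e; omega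
    omega
  have prop : ∀ q, q + 1 < n → u q < u (q+1) → ∀ r, q ≤ r → r + 1 < n → u r < u (r+1) := by
    intro q hq hbase r hqr
    induction r, hqr using Nat.le_induction with
    | base => intro _; exact hbase
    | succ r hr ih =>
        intro hr2
        have := np (r+1) (by omega) (by omega)
        rw [show r+1-1 = r by omega] at this
        exact this (ih (by omega))
  set q0 : ℕ := ((π ⟨0, hn⟩ : Fin n) : ℕ) with hq0def
  have hq0 : q0 < n := (π ⟨0, hn⟩).isLt
  have huq0 : u q0 = 1 := by
    rw [hu, permWord_eq π⁻¹ hq0]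
    have : π⁻¹ ⟨q0, hq0⟩ = ⟨0, hn⟩ := by
      apply π.injective; simp [hq0def]
    rw [this]
  have hu1 : ∀ q, q < n → q ≠ q0 → 1 < u q := by
    intro q hq hne
    have h1 : 0 < u q := permWord_pos π⁻¹ hq
    have : u q ≠ 1 := fun e => hne (permWord_inj π⁻¹ hq hq0 (by show u q = u q0; rw [e, huq0]))
    omega
  have step_up : ∀ r, q0 ≤ r → r + 1 ≤ n - 1 → u r < u (r+1) := by
    intro r hr hrn
    have hbase : u q0 < u (q0+1) := by
      rw [huq0]; exact hu1 (q0+1) (by omega) (by omega)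
    exact prop q0 (by omega) hbase r hr (by omega)
  have step_dn : ∀ r, 0 ≤ r → r + 1 ≤ q0 → u (r+1) < u r := by
    intro r _ hr
    by_contra hcon
    have hne : u r ≠ u (r+1) := fun e =>
      by have := permWord_inj π⁻¹ (show r < n by omega) (show r+1 < n by omega) e; omega
    have hasc : u r < u (r+1) := by omega
    have : u r < u q0 := by
      refine chain_lt (hi := n-1) (lo := r) ?_ r q0 le_rfl (by omega) (by omega)
      intro t ht ht2
      exact prop r (by omega) hasc t ht (by omega)
    have hpos : 0 < u r := permWord_pos π⁻¹ (show r < n by omega)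
    omega
  set A : ℕ := ((π ⟨j, by omega⟩ : Fin n) : ℕ) with hA
  set A' : ℕ := ((π ⟨j', hj'⟩ : Fin n) : ℕ) with hA'
  have hAn : A < n := (π _).isLt
  have hA'n : A' < n := (π _).isLt
  have huA : u A = j + 1 := by
    rw [hu, permWord_eq π⁻¹ hAn]
    have : π⁻¹ ⟨A, hAn⟩ = ⟨j, by omega⟩ := by apply π.injective; simp [hA]
    rw [this]
  have huA' : u A' = j' + 1 := by
    rw [hu, permWord_eq π⁻¹ hA'n]
    have : π⁻¹ ⟨A', hA'n⟩ = ⟨j', hj'⟩ := by apply π.injective; simp [hA']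
    rw [this]
  rw [permWord_eq π (show j < n by omega), permWord_eq π hj', permWord_eq π hn]
  rw [← hA, ← hA', ← hq0def]
  constructor
  · intro hlt
    by_contra hcon
    have : A' < q0 := by omega
    have : u A' < u A := chain_gt (lo := 0) (hi := q0) step_dn A A' (Nat.zero_le _) (by omega) (by omega)
    omega
  · intro hle
    have hne : A ≠ A' := by
      intro e
      have : π ⟨j, by omega⟩ = π ⟨j', hj'⟩ := Fin.ext (by omega)
      have := π.injective this
      have := congrArg Fin.val this
      simp at this; omega
    by_contra hcon
    have hA'A : A' < A := by omega
    have : u A' < u A := chain_lt (lo := q0) (hi := n-1) step_up A' A (by omega) hA'A (by omega)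
    omega

lemma ipk_of_pp (π : Equiv.Perm (Fin n)) (h : Pp π) : ipk π = 0 := by
  rw [ipk, pkCount, Finset.card_eq_zero, Finset.filter_eq_empty_iff]
  intro i hi
  rw [Finset.mem_Icc] at hi
  rintro ⟨h1, h2⟩
  have hn3 : 3 ≤ n := by omega
  obtain ⟨p, rfl⟩ : ∃ p, i = p + 1 := ⟨i - 1, by omega⟩
  rw [show p + 1 - 1 = p by omega] at h1 h2
  have h1 : permWord π⁻¹ (p - 1) < permWord π⁻¹ p := h1
  have hpA : p - 1 < n := by omega
  have hpB : p < n := by omega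
  have hpC : p + 1 < n := by omega
  set jA : ℕ := ((π⁻¹ ⟨p-1, hpA⟩ : Fin n) : ℕ) with hjA
  set jB : ℕ := ((π⁻¹ ⟨p, hpB⟩ : Fin n) : ℕ) with hjB
  set jC : ℕ := ((π⁻¹ ⟨p+1, hpC⟩ : Fin n) : ℕ) with hjC
  have huA : permWord π⁻¹ (p-1) = jA + 1 := permWord_eq π⁻¹ hpA
  have huB : permWord π⁻¹ p = jB + 1 := permWord_eq π⁻¹ hpB
  have huC : permWord π⁻¹ (p+1) = jC + 1 := permWord_eq π⁻¹ hpC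
  have hjAn : jA < n := (π⁻¹ _).isLt
  have hjBn : jB < n := (π⁻¹ _).isLt
  have hjCn : jC < n := (π⁻¹ _).isLt
  have hwA : permWord π jA = (p - 1) + 1 := by
    rw [permWord_eq π hjAn]
    have : π ⟨jA, hjAn⟩ = ⟨p-1, hpA⟩ := by apply π.symm.injective; simp [hjA]
    rw [this]
  have hwB : permWord π jB = p + 1 := by
    rw [permWord_eq π hjBn]
    have : π ⟨jB, hjBn⟩ = ⟨p, hpB⟩ := by apply π.symm.injective; simp [hjB]
    rw [this]
  have hwC : permWord π jC = (p + 1) + 1 := by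
    rw [permWord_eq π hjCn]
    have : π ⟨jC, hjCn⟩ = ⟨p+1, hpC⟩ := by apply π.symm.injective; simp [hjC]
    rw [this]
  have e1 := h jA jB (by omega) hjBn
  have e2 := h jC jB (by omega) hjBn
  rw [hwA, hwB] at e1
  rw [hwC, hwB] at e2
  omega

def bOf (π : Equiv.Perm (Fin n)) : ℕ → Bool :=
  fun j => decide (0 < permWord π j ∧ permWord π j < permWord π 0)

lemma bOf_true_iff (π : Equiv.Perm (Fin n)) {j : ℕ} (hj : j < n) :
    bOf π j = true ↔ permWord π j < permWord π 0 := by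
  have := permWord_pos π hj
  simp only [bOf, decide_eq_true_eq]
  omega

lemma bOf_false_iff (π : Equiv.Perm (Fin n)) {j : ℕ} (hj : j < n) :
    bOf π j = false ↔ permWord π 0 ≤ permWord π j := by
  rw [Bool.eq_false_iff, Ne, bOf_true_iff π hj]; omega

lemma bOf_zero (π : Equiv.Perm (Fin n)) : bOf π 0 = false := by
  simp [bOf]

lemma bOf_support (π : Equiv.Perm (Fin n)) {j : ℕ} (hj : n ≤ j) : bOf π j = false := by
  simp [bOf, permWord, show ¬ (j < n) by omega]

def cnt (n : ℕ) (b : ℕ → Bool) : ℕ :=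
  ((Finset.Icc 1 (n-2)).filter fun p => b p = false ∧ b (p+1) = true).card

lemma peak_iff (π : Equiv.Perm (Fin n)) (h : Pp π) {p : ℕ} (hp : 1 ≤ p) (hpn : p + 1 ≤ n - 1) :
    (permWord π (p-1) < permWord π p ∧ permWord π (p+1) < permWord π p)
      ↔ (bOf π p = false ∧ bOf π (p+1) = true) := by
  have hn3 : 3 ≤ n := by omega
  have h1 := h (p-1) p (by omega) (by omega)
  have h2 := h p (p+1) (by omega) (by omega)
  have hne : permWord π p ≠ permWord π (p+1) := fun e => by
    have := permWord_inj π (by omega) (by omega) e; omega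
  rw [bOf_false_iff π (show p < n by omega), bOf_true_iff π (show p + 1 < n by omega)]
  omega

lemma pk_formula (π : Equiv.Perm (Fin n)) (h : Pp π) : pkCount π = cnt n (bOf π) := by
  rw [pkCount, cnt]
  apply Finset.card_nbij' (fun i => i - 1) (fun p => p + 1)
  · intro i hi
    simp only [Finset.mem_coe, Finset.mem_filter, Finset.mem_Icc] at hi ⊢
    obtain ⟨⟨hi2, hin⟩, hc⟩ := hi
    rw [show i - 2 = (i-1) - 1 by omega] at hc
    have := (peak_iff π h (p := i-1) (by omega) (by omega)).mp
      (by rw [show (i-1)+1 = i by omega]; exact hc)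
    exact ⟨by omega, this⟩
  · intro p hp
    simp only [Finset.mem_coe, Finset.mem_filter, Finset.mem_Icc] at hp ⊢
    obtain ⟨⟨hp1, hpn⟩, hc⟩ := hp
    have := (peak_iff π h (p := p) (by omega) (by omega)).mpr hc
    constructor
    · omega
    · rw [show p + 1 - 2 = p - 1 by omega, show p + 1 - 1 = p by omega]
      exact this
  · intro i hi
    simp only [Finset.mem_coe, Finset.mem_filter, Finset.mem_Icc] at hi
    show i - 1 + 1 = i
    omega
  · intro p _
    show p + 1 - 1 = p
    omega

lemma pp_inj (π ρ : Equiv.Perm (Fin n)) (hπ : Pp π) (hρ : Pp ρ) (hb : bOf π = bOf ρ) :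
    π = ρ := by
  have key : ∀ j j' : ℕ, j < j' → j' < n →
      (permWord π j < permWord π j' ↔ permWord ρ j < permWord ρ j') := by
    intro j j' h1 h2
    rw [hπ j j' h1 h2, hρ j j' h1 h2, ← bOf_false_iff π h2, ← bOf_false_iff ρ h2, hb]
  set σ : Equiv.Perm (Fin n) := π.symm.trans ρ with hσ
  have hmono : StrictMono σ := by
    intro a b hab
    set ja : ℕ := ((π.symm a : Fin n) : ℕ) with hja
    set jb : ℕ := ((π.symm b : Fin n) : ℕ) with hjb
    have hjan : ja < n := (π.symm a).isLt
    have hjbn : jb < n := (π.symm b).isLt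
    have hwa : permWord π ja = (a : ℕ) + 1 := by
      rw [permWord_eq π hjan]
      have : π ⟨ja, hjan⟩ = a := by simp [hja]
      rw [this]
    have hwb : permWord π jb = (b : ℕ) + 1 := by
      rw [permWord_eq π hjbn]
      have : π ⟨jb, hjbn⟩ = b := by simp [hjb]
      rw [this]
    have hra : σ a = ρ ⟨ja, hjan⟩ := rfl
    have hrb : σ b = ρ ⟨jb, hjbn⟩ := rfl
    have hwra : permWord ρ ja = (σ a : ℕ) + 1 := by rw [permWord_eq ρ hjan, ← hra]
    have hwrb : permWord ρ jb = (σ b : ℕ) + 1 := by rw [permWord_eq ρ hjbn, ← hrb]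
    have hne : ja ≠ jb := by
      intro e
      have : π.symm a = π.symm b := Fin.ext e
      have : a = b := π.symm.injective this
      exact absurd this (ne_of_lt hab)
    have habv : (a : ℕ) < (b : ℕ) := hab
    rw [Fin.lt_def]
    rcases lt_or_gt_of_ne hne with hlt | hgt
    · have := (key ja jb hlt hjbn).mp (by omega)
      omega
    · have h2 := (key jb ja hgt hjan)
      have hnr : permWord ρ jb ≠ permWord ρ ja := fun e => hne (permWord_inj ρ hjbn hjan e).symm
      omega
  have hrange : Set.range σ = Set.range (id : Fin n → Fin n) := by
    rw [Set.range_id, Equiv.range_eq_univ]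
  haveI : WellFoundedLT (Fin n) := Finite.to_wellFoundedLT
  have : ⇑σ = id := (hmono.range_inj strictMono_id).mp hrange
  apply Equiv.ext
  intro x
  have := congrFun this (π x)
  simpa [hσ] using this.symm

/-! ### construction -/

def cntP (b : ℕ → Bool) (v : Bool) (j : ℕ) : ℕ :=
  ((Finset.range j).filter fun i => b i = v).card

lemma cntP_succ (b : ℕ → Bool) (v : Bool) (j : ℕ) :
    cntP b v (j+1) = cntP b v j + (if b j = v then 1 else 0) := by
  have hnm : j ∉ (Finset.range j).filter (fun i => b i = v) := by simp
  by_cases h : b j = v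
  · rw [cntP, Finset.range_add_one, Finset.filter_insert, if_pos h,
      Finset.card_insert_of_notMem hnm, if_pos h]
    rfl
  · rw [cntP, Finset.range_add_one, Finset.filter_insert, if_neg h, if_neg h, Nat.add_zero]
    rfl

lemma cntP_mono (b : ℕ → Bool) (v : Bool) {j j' : ℕ} (h : j ≤ j') :
    cntP b v j ≤ cntP b v j' :=
  Finset.card_le_card (Finset.filter_subset_filter _ (Finset.range_subset_range.2 h))

lemma cntP_strict (b : ℕ → Bool) {v : Bool} {j j' : ℕ} (h : b j = v) (hjj' : j < j') :
    cntP b v j + 1 ≤ cntP b v j' := by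
  have h1 : cntP b v (j+1) = cntP b v j + 1 := by rw [cntP_succ, h]; simp
  have := cntP_mono b v (show j + 1 ≤ j' from hjj')
  omega

lemma cntP_add (b : ℕ → Bool) (j : ℕ) : cntP b true j + cntP b false j = j := by
  induction j with
  | zero => simp [cntP]
  | succ j ih =>
      rw [cntP_succ, cntP_succ]
      cases h : b j
      all_goals simp [h]
      all_goals omega

lemma cntP_le (b : ℕ → Bool) (v : Bool) (j : ℕ) : cntP b v j ≤ j := by
  have := cntP_add b j
  cases v
  · omega
  · omega

def shuffleFun (n : ℕ) (b : ℕ → Bool) : Fin n → Fin n := fun j =>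
  if h : b (j : ℕ) = true then
    ⟨cntP b true n - 1 - cntP b true (j : ℕ), by
      have h1 : cntP b true n ≤ n := cntP_le b true n
      have h2 : (0:ℕ) < n := j.pos
      omega⟩
  else
    ⟨cntP b true n + cntP b false (j : ℕ), by
      have hb : b (j : ℕ) = false := by revert h; cases b (j : ℕ) <;> simp
      have h1 := cntP_strict b hb j.isLt
      have h2 := cntP_add b n
      omega⟩

lemma shuffle_val_true {b : ℕ → Bool} {j : Fin n} (h : b (j : ℕ) = true) :
    (shuffleFun n b j : ℕ) = cntP b true n - 1 - cntP b true (j : ℕ) := by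
  simp [shuffleFun, h]

lemma shuffle_val_false {b : ℕ → Bool} {j : Fin n} (h : b (j : ℕ) = false) :
    (shuffleFun n b j : ℕ) = cntP b true n + cntP b false (j : ℕ) := by
  simp [shuffleFun, h]

lemma shuffle_lt_of_true {b : ℕ → Bool} {j j' : Fin n} (hjj' : (j : ℕ) < (j' : ℕ))
    (h : b (j' : ℕ) = true) : shuffleFun n b j' < shuffleFun n b j := by
  rw [Fin.lt_def, shuffle_val_true h]
  have hs : cntP b true (j' : ℕ) + 1 ≤ cntP b true n := cntP_strict b h j'.isLt
  cases hbj : b (j : ℕ)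
  · rw [shuffle_val_false hbj]; omega
  · rw [shuffle_val_true hbj]
    have := cntP_strict b hbj hjj'
    omega

lemma shuffle_lt_of_false {b : ℕ → Bool} {j j' : Fin n} (hjj' : (j : ℕ) < (j' : ℕ))
    (h : b (j' : ℕ) = false) : shuffleFun n b j < shuffleFun n b j' := by
  rw [Fin.lt_def, shuffle_val_false h]
  have h1 := cntP_strict b h j'.isLt
  have h2 := cntP_add b n
  cases hbj : b (j : ℕ)
  · rw [shuffle_val_false hbj]
    have := cntP_strict b hbj hjj'
    omega
  · rw [shuffle_val_true hbj]
    have := cntP_strict b hbj j.isLt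
    omega

lemma shuffle_injective {b : ℕ → Bool} : Function.Injective (shuffleFun n b) := by
  intro j j' he
  by_contra hne
  have hne' : (j : ℕ) ≠ (j' : ℕ) := fun e => hne (Fin.ext e)
  rcases lt_or_gt_of_ne hne' with hl | hl
  · cases h : b (j' : ℕ)
    · exact absurd he (ne_of_lt (shuffle_lt_of_false hl h))
    · exact absurd he (ne_of_gt (shuffle_lt_of_true hl h))
  · cases h : b (j : ℕ)
    · exact absurd he (ne_of_gt (shuffle_lt_of_false hl h))
    · exact absurd he (ne_of_lt (shuffle_lt_of_true hl h))

noncomputable def shufflePerm (n : ℕ) (b : ℕ → Bool) : Equiv.Perm (Fin n) :=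
  Equiv.ofBijective _ (Finite.injective_iff_bijective.mp (shuffle_injective (b := b)))

lemma shufflePerm_apply {b : ℕ → Bool} (j : Fin n) :
    shufflePerm n b j = shuffleFun n b j := rfl

lemma permWord_shuffle {b : ℕ → Bool} {j : ℕ} (hj : j < n) :
    permWord (shufflePerm n b) j = (shuffleFun n b ⟨j, hj⟩ : ℕ) + 1 := permWord_eq _ hj

lemma cntP_zero (b : ℕ → Bool) (v : Bool) : cntP b v 0 = 0 := by simp [cntP]

lemma shuffle_pw0 {b : ℕ → Bool} (hn : 0 < n) (hb0 : b 0 = false) :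
    permWord (shufflePerm n b) 0 = cntP b true n + 1 := by
  rw [permWord_shuffle hn, shuffle_val_false (by exact hb0), cntP_zero]

lemma pp_shuffle {b : ℕ → Bool} (hb0 : b 0 = false) : Pp (shufflePerm n b) := by
  intro j j' hjj' hj'
  have hn : 0 < n := by omega
  rw [permWord_shuffle (show j < n by omega), permWord_shuffle hj', shuffle_pw0 hn hb0]
  cases h : b j'
  · have h2 := shuffle_lt_of_false (j := ⟨j, by omega⟩) (j' := ⟨j', hj'⟩) hjj' h
    have hval : (shuffleFun n b ⟨j', hj'⟩ : ℕ) = cntP b true n + cntP b false j' :=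
      shuffle_val_false h
    rw [Fin.lt_def] at h2
    omega
  · have h2 := shuffle_lt_of_true (j := ⟨j, by omega⟩) (j' := ⟨j', hj'⟩) hjj' h
    have hval : (shuffleFun n b ⟨j', hj'⟩ : ℕ) = cntP b true n - 1 - cntP b true j' :=
      shuffle_val_true h
    have hs := cntP_strict b h hj'
    rw [Fin.lt_def] at h2
    omega

lemma bOf_shuffle {b : ℕ → Bool} (hn : 0 < n) (hb0 : b 0 = false)
    (hsup : ∀ j, n ≤ j → b j = false) : bOf (shufflePerm n b) = b := by
  funext j
  by_cases hj : j < n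
  · cases h : b j
    · rw [bOf_false_iff _ hj, shuffle_pw0 hn hb0, permWord_shuffle hj,
        shuffle_val_false (show b ((⟨j, hj⟩ : Fin n) : ℕ) = false from h)]
      omega
    · rw [bOf_true_iff _ hj, shuffle_pw0 hn hb0, permWord_shuffle hj,
        shuffle_val_true (show b ((⟨j, hj⟩ : Fin n) : ℕ) = true from h)]
      have hs := cntP_strict b h hj
      omega
  · rw [bOf_support _ (not_lt.mp hj), hsup j (not_lt.mp hj)]

/-! ### words and change sets -/

def vOf (b : ℕ → Bool) : ℕ → Bool := fun j => decide (j = 0) || b j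

lemma vOf_zero (b : ℕ → Bool) : vOf b 0 = true := by simp [vOf]

lemma vOf_pos (b : ℕ → Bool) {j : ℕ} (h : j ≠ 0) : vOf b j = b j := by simp [vOf, h]

def DOf (n : ℕ) (b : ℕ → Bool) : Finset ℕ :=
  (Finset.range n).filter fun i => vOf b i ≠ vOf b (i+1)

lemma tele (v : ℕ → Bool) : ∀ N : ℕ,
    ((Finset.range N).filter fun i => v i = true ∧ v (i+1) = false).card
      + (if v N = true then 1 else 0)
    = ((Finset.range N).filter fun i => v i = false ∧ v (i+1) = true).card
      + (if v 0 = true then 1 else 0) := by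
  intro N
  induction N with
  | zero => simp
  | succ N ih =>
      have hnm1 : N ∉ (Finset.range N).filter (fun i => v i = true ∧ v (i+1) = false) := by simp
      have hnm2 : N ∉ (Finset.range N).filter (fun i => v i = false ∧ v (i+1) = true) := by simp
      rw [Finset.range_add_one, Finset.filter_insert, Finset.filter_insert]
      cases h1 : v N <;> cases h2 : v (N+1) <;>
        simp [h1, h2, Finset.card_insert_of_notMem hnm1,
          Finset.card_insert_of_notMem hnm2] at ih ⊢ <;>
        omega

lemma ne_card (v : ℕ → Bool) : ∀ N : ℕ,
    ((Finset.range N).filter fun i => v i ≠ v (i+1)).card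
    = ((Finset.range N).filter fun i => v i = true ∧ v (i+1) = false).card
      + ((Finset.range N).filter fun i => v i = false ∧ v (i+1) = true).card := by
  intro N
  induction N with
  | zero => simp
  | succ N ih =>
      have hnm0 : N ∉ (Finset.range N).filter (fun i => v i ≠ v (i+1)) := by simp
      have hnm1 : N ∉ (Finset.range N).filter (fun i => v i = true ∧ v (i+1) = false) := by simp
      have hnm2 : N ∉ (Finset.range N).filter (fun i => v i = false ∧ v (i+1) = true) := by simp
      rw [Finset.range_add_one, Finset.filter_insert, Finset.filter_insert, Finset.filter_insert]
      cases h1 : v N <;> cases h2 : v (N+1) <;>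
        simp [h1, h2, Finset.card_insert_of_notMem hnm0, Finset.card_insert_of_notMem hnm1,
          Finset.card_insert_of_notMem hnm2] at ih ⊢ <;>
        omega

lemma A_eq_cnt {b : ℕ → Bool} (hsup : ∀ j, n ≤ j → b j = false) :
    ((Finset.range n).filter fun i => vOf b i = false ∧ vOf b (i+1) = true).card = cnt n b := by
  rw [cnt]
  have hset : ((Finset.range n).filter fun i => vOf b i = false ∧ vOf b (i+1) = true)
      = (Finset.Icc 1 (n-2)).filter fun p => b p = false ∧ b (p+1) = true := by
    ext i
    simp only [Finset.mem_filter, Finset.mem_range, Finset.mem_Icc]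
    constructor
    · rintro ⟨hin, hf, ht⟩
      have hi0 : i ≠ 0 := by
        intro e; subst e; rw [vOf_zero] at hf; cases hf
      rw [vOf_pos b hi0] at hf
      rw [vOf_pos b (by omega)] at ht
      refine ⟨⟨by omega, ?_⟩, hf, ht⟩
      by_contra hc
      rw [hsup (i+1) (by omega)] at ht
      cases ht
    · rintro ⟨⟨h1, h2⟩, hf, ht⟩
      have hn3 : 3 ≤ n := by
        rcases Nat.lt_or_ge n 3 with h | h
        · interval_cases n <;> omega
        · exact h
      refine ⟨by omega, ?_, ?_⟩
      · rw [vOf_pos b (by omega)]; exact hf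
      · rw [vOf_pos b (by omega)]; exact ht
  rw [hset]

lemma Dcard {b : ℕ → Bool} (hn : 0 < n) (hb0 : b 0 = false)
    (hsup : ∀ j, n ≤ j → b j = false) : (DOf n b).card = 2 * cnt n b + 1 := by
  have hv0 : vOf b 0 = true := vOf_zero b
  have hvn : vOf b n = false := by rw [vOf_pos b (by omega)]; exact hsup n le_rfl
  have ht := tele (vOf b) n
  rw [hv0, hvn] at ht
  norm_num at ht
  have hne := ne_card (vOf b) n
  have hA := A_eq_cnt hsup
  rw [DOf]
  omega

lemma DOf_inj {b b' : ℕ → Bool} (hn : 0 < n)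
    (hb0 : b 0 = false) (hsup : ∀ j, n ≤ j → b j = false)
    (hb0' : b' 0 = false) (hsup' : ∀ j, n ≤ j → b' j = false)
    (hD : DOf n b = DOf n b') : b = b' := by
  have hv : ∀ j, j ≤ n → vOf b j = vOf b' j := by
    intro j
    induction j with
    | zero => intro _; rw [vOf_zero, vOf_zero]
    | succ j ih =>
        intro hj
        have hvj := ih (by omega)
        have h1 : j ∈ DOf n b ↔ (vOf b j ≠ vOf b (j+1)) := by
          simp [DOf, Finset.mem_filter, Finset.mem_range, show j < n by omega]
        have h2 : j ∈ DOf n b' ↔ (vOf b' j ≠ vOf b' (j+1)) := by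
          simp [DOf, Finset.mem_filter, Finset.mem_range, show j < n by omega]
        have hiff : (vOf b j ≠ vOf b (j+1)) ↔ (vOf b' j ≠ vOf b' (j+1)) := by
          rw [← h1, ← h2, hD]
        have key : ∀ x y x' y' : Bool, (x ≠ y ↔ x' ≠ y') → x = x' → y = y' := by decide
        exact key _ _ _ _ hiff hvj
  funext j
  rcases Nat.eq_zero_or_pos j with rfl | hj0
  · rw [hb0, hb0']
  · by_cases hj : j < n
    · rw [← vOf_pos b (by omega), ← vOf_pos b' (by omega), hv j (by omega)]
    · rw [hsup j (by omega), hsup' j (by omega)]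

lemma exists_b (hn : 0 < n) {k : ℕ} {S : Finset ℕ} (hS : S ⊆ Finset.range n)
    (hcard : S.card = 2*k+1) :
    ∃ b : ℕ → Bool, b 0 = false ∧ (∀ j, n ≤ j → b j = false) ∧ cnt n b = k ∧ DOf n b = S := by
  classical
  set w : ℕ → Bool := fun j => decide (Even ((S.filter fun x => x < j).card)) with hw
  set b : ℕ → Bool := fun j => if j = 0 then false else if j < n then w j else false with hb
  have hb0 : b 0 = false := by simp [hb]
  have hsup : ∀ j, n ≤ j → b j = false := by
    intro j hj
    simp [hb, show j ≠ 0 by omega, show ¬ (j < n) by omega]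
  have hstep : ∀ j, (S.filter fun x => x < j+1).card
      = (S.filter fun x => x < j).card + (if j ∈ S then 1 else 0) := by
    intro j
    have hsplit : (S.filter fun x => x < j+1)
        = (S.filter fun x => x < j) ∪ (S.filter fun x => x = j) := by
      ext x
      simp only [Finset.mem_filter, Finset.mem_union]
      constructor
      · rintro ⟨h1, h2⟩
        rcases Nat.lt_succ_iff_lt_or_eq.mp h2 with h | h
        · exact Or.inl ⟨h1, h⟩
        · exact Or.inr ⟨h1, h⟩
      · rintro (⟨h1, h2⟩ | ⟨h1, h2⟩)
        · exact ⟨h1, by omega⟩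
        · exact ⟨h1, by omega⟩
    have hdisj : Disjoint (S.filter fun x => x < j) (S.filter fun x => x = j) := by
      rw [Finset.disjoint_left]
      intro x h1 h2
      simp only [Finset.mem_filter] at h1 h2
      omega
    rw [hsplit, Finset.card_union_of_disjoint hdisj, Finset.filter_eq']
    split <;> simp
  have hwstep : ∀ j, w (j+1) = (if j ∈ S then !(w j) else w j) := by
    intro j
    by_cases hj : j ∈ S
    · rw [if_pos hj]
      simp only [hw]
      rw [hstep j, if_pos hj, ← decide_not]
      congr 1
      rw [Nat.even_add_one]
    · rw [if_neg hj]; simp only [hw]; rw [hstep j, if_neg hj, Nat.add_zero]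
  have hw0 : w 0 = true := by simp [hw]
  have hwn : w n = false := by
    have hfe : S.filter (fun x => x < n) = S :=
      Finset.filter_true_of_mem (fun x hx => Finset.mem_range.mp (hS hx))
    have hodd : ¬ Even (2*k+1) := by
      have h2k : Even (2*k) := ⟨k, by ring⟩
      rw [Nat.even_add_one]
      simpa using h2k
    simp only [hw]
    rw [hfe, hcard]
    simp [hodd]
  have hvw : ∀ j, j ≤ n → vOf b j = w j := by
    intro j hj
    rcases Nat.eq_zero_or_pos j with rfl | hj0
    · rw [vOf_zero, hw0]
    · rw [vOf_pos b (by omega)]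
      rcases Nat.lt_or_ge j n with h | h
      · simp [hb, show j ≠ 0 by omega, h]
      · have hjn : j = n := by omega
        subst hjn
        rw [hsup j le_rfl, hwn]
  have hD : DOf n b = S := by
    ext i
    simp only [DOf, Finset.mem_filter, Finset.mem_range]
    constructor
    · rintro ⟨hin, hne⟩
      rw [hvw i (by omega), hvw (i+1) (by omega), hwstep i] at hne
      by_contra hc
      rw [if_neg hc] at hne
      exact hne rfl
    · intro hiS
      have hin : i < n := Finset.mem_range.mp (hS hiS)
      refine ⟨hin, ?_⟩
      rw [hvw i (by omega), hvw (i+1) (by omega), hwstep i, if_pos hiS]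
      cases w i <;> simp
  have hcnt : cnt n b = k := by
    have hdc := Dcard hn hb0 hsup
    rw [hD, hcard] at hdc
    omega
  exact ⟨b, hb0, hsup, hcnt, hD⟩

end S7

/-- For any `n ≥ 1` and `k ≥ 0`, the number of permutations `π ∈ S_n` with `pk(π) = k`
whose inverse has no peaks is the binomial coefficient `C(n, 2k+1)`. -/
theorem stmt7 (n k : ℕ) (hn : 1 ≤ n) :
    Nat.card {π : Equiv.Perm (Fin n) // pkCount π = k ∧ ipk π = 0}
      = Nat.choose n (2 * k + 1) := by
  classical
  have e1 : {π : Equiv.Perm (Fin n) // pkCount π = k ∧ ipk π = 0} ≃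
      {b : ℕ → Bool // b 0 = false ∧ (∀ j, n ≤ j → b j = false) ∧ S7.cnt n b = k} := by
    apply Equiv.ofBijective (fun π =>
      (⟨S7.bOf π.1, S7.bOf_zero π.1, fun j hj => S7.bOf_support π.1 hj, by
        rw [← S7.pk_formula π.1 (S7.pp_of_ipk π.1 π.2.2)]; exact π.2.1⟩ :
        {b : ℕ → Bool // b 0 = false ∧ (∀ j, n ≤ j → b j = false) ∧ S7.cnt n b = k}))
    constructor
    · rintro ⟨π, hπ⟩ ⟨ρ, hρ⟩ h
      have hb : S7.bOf π = S7.bOf ρ := congrArg Subtype.val h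
      exact Subtype.ext (S7.pp_inj π ρ (S7.pp_of_ipk π hπ.2) (S7.pp_of_ipk ρ hρ.2) hb)
    · rintro ⟨b, hb0, hsup, hcnt⟩
      refine ⟨⟨S7.shufflePerm n b, ?_, S7.ipk_of_pp _ (S7.pp_shuffle hb0)⟩, ?_⟩
      · rw [S7.pk_formula _ (S7.pp_shuffle hb0), S7.bOf_shuffle hn hb0 hsup, hcnt]
      · exact Subtype.ext (S7.bOf_shuffle hn hb0 hsup)
  have e2 : {b : ℕ → Bool // b 0 = false ∧ (∀ j, n ≤ j → b j = false) ∧ S7.cnt n b = k} ≃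
      {S : Finset ℕ // S ∈ (Finset.range n).powersetCard (2*k+1)} := by
    apply Equiv.ofBijective (fun b =>
      (⟨S7.DOf n b.1, by
        rw [Finset.mem_powersetCard]
        exact ⟨Finset.filter_subset _ _,
          by rw [S7.Dcard hn b.2.1 b.2.2.1, b.2.2.2]⟩⟩ :
        {S : Finset ℕ // S ∈ (Finset.range n).powersetCard (2*k+1)}))
    constructor
    · rintro ⟨b, h1, h2, h3⟩ ⟨b', h1', h2', h3'⟩ h
      exact Subtype.ext (S7.DOf_inj hn h1 h2 h1' h2' (congrArg Subtype.val h))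
    · rintro ⟨S, hS⟩
      rw [Finset.mem_powersetCard] at hS
      obtain ⟨b, hb0, hsup, hcnt, hD⟩ := S7.exists_b hn hS.1 hS.2
      exact ⟨⟨b, hb0, hsup, hcnt⟩, Subtype.ext hD⟩
  rw [Nat.card_congr (e1.trans e2)]
  have hfin := Nat.card_eq_finsetCard ((Finset.range n).powersetCard (2*k+1))
  rw [Finset.card_powersetCard, Finset.card_range] at hfin
  exact hfin
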